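/- arXiv:2306.00172 — 5 statements merged into one kernel-verified Lean document; each statement's English description precedes it below -/
import Mathlib

section
/- For every ρ ∈ [0,1], every B ≥ 0, every feasible expert strategy x^π, and every sequence of RL suggestions x̃_1, …, x̃_T (each x̃_v ∈ U ∪ {skip}, and whenever x̃_v = u ∈ U the item u has remaining capacity under LOMAR's own counts, i.e. |V_{u,v−1}| < c(u)), the strategy x produced by LOMAR's switching rule is feasible and its total reward satisfies R_T ≥ ρ·R^π_T − B. -/
/-- `cnt x u v` = `|V_{u,v}|`: the number of online items among steps `1, …, v`
that strategy `x` matches to offline item `u`. -/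
def cnt {U : Type*} [DecidableEq U] (x : ℕ → Option U) (u : U) (v : ℕ) : ℕ :=
  ((Finset.Icc 1 v).filter fun v' => x v' = some u).card

/-- `rew w x v` = `R_v`: the cumulative reward of strategy `x` after step `v`
(skipped steps contribute `0`). -/
def rew {U : Type*} (w : U → ℕ → ℝ) (x : ℕ → Option U) (v : ℕ) : ℝ :=
  ∑ v' ∈ Finset.Icc 1 v, ((x v').elim (0 : ℝ) fun u => w u v')

/-- LOMAR's switching condition at step `v` (no free disposal): the RL suggestion
`x̃_v` may be followed iff
`R_{v−1} + w(x̃_v, v) ≥ ρ·(R^π_v + Σ_u (|V_{u,v−1}| − |V^π_{u,v}| + 1{u = x̃_v})⁺ · wmax(u)) − B`. -/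
def lomarCond {U : Type*} [Fintype U] [DecidableEq U] (wmax : U → ℝ) (w : U → ℕ → ℝ)
    (ρ B : ℝ) (xπ x xt : ℕ → Option U) (v : ℕ) : Prop :=
  rew w x (v - 1) + ((xt v).elim (0 : ℝ) fun u => w u v) ≥
    ρ * (rew w xπ v +
      ∑ u : U, max ((cnt x u (v - 1) : ℝ) - (cnt xπ u v : ℝ) +
        (if xt v = some u then (1 : ℝ) else 0)) 0 * wmax u) - B

lemma cnt_succ {U : Type*} [DecidableEq U] (x : ℕ → Option U) (u : U) (n : ℕ) :
    cnt x u (n + 1) = cnt x u n + (if x (n + 1) = some u then 1 else 0) := by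
  unfold cnt
  rw [Finset.card_filter, Finset.card_filter,
    Finset.sum_Icc_succ_top (Nat.le_add_left 1 n)]

lemma rew_succ {U : Type*} (w : U → ℕ → ℝ) (x : ℕ → Option U) (n : ℕ) :
    rew w x (n + 1) = rew w x n + ((x (n + 1)).elim (0 : ℝ) fun u => w u (n + 1)) := by
  unfold rew
  rw [Finset.sum_Icc_succ_top (Nat.le_add_left 1 n)]

lemma cnt_mono {U : Type*} [DecidableEq U] (x : ℕ → Option U) (u : U) {v v' : ℕ}
    (h : v ≤ v') : cnt x u v ≤ cnt x u v' :=
  Finset.card_le_card (Finset.filter_subset_filter _ (Finset.Icc_subset_Icc_right h))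

/-- **Theorem 1 (LOMAR robustness, no free disposal).**
For every `ρ ∈ [0,1]`, `B ≥ 0`, every feasible expert strategy `x^π`, and every
sequence of RL suggestions `x̃` (which only suggests offline items with remaining
capacity under LOMAR's own counts), the strategy `x` produced by LOMAR's switching
rule is feasible and its total reward satisfies `R_T ≥ ρ·R^π_T − B`. -/
theorem lomar_robustness
    {U : Type*} [Fintype U] [DecidableEq U]
    (c : U → ℕ) (wmax : U → ℝ) (T : ℕ) (w : U → ℕ → ℝ)
    (hw₀ : ∀ u v, 0 ≤ w u v) (hw₁ : ∀ u v, w u v ≤ wmax u)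
    (ρ B : ℝ) (hρ₀ : 0 ≤ ρ) (hρ₁ : ρ ≤ 1) (hB : 0 ≤ B)
    (xπ : ℕ → Option U) (hπfeas : ∀ u, cnt xπ u T ≤ c u)
    (xt x : ℕ → Option U)
    (hxt : ∀ v, 1 ≤ v → v ≤ T → ∀ u, xt v = some u → cnt x u (v - 1) < c u)
    (hfollow : ∀ v, 1 ≤ v → v ≤ T →
      lomarCond wmax w ρ B xπ x xt v → x v = xt v)
    (hexpert : ∀ v, 1 ≤ v → v ≤ T → ¬ lomarCond wmax w ρ B xπ x xt v →
      ∀ u, xπ v = some u → cnt x u (v - 1) < c u → x v = some u)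
    (hskip : ∀ v, 1 ≤ v → v ≤ T → ¬ lomarCond wmax w ρ B xπ x xt v →
      (xπ v = none ∨ ∃ u, xπ v = some u ∧ ¬ cnt x u (v - 1) < c u) → x v = none) :
    (∀ u, cnt x u T ≤ c u) ∧ rew w x T ≥ ρ * rew w xπ T - B := by
  have hwmax : ∀ u : U, 0 ≤ wmax u := fun u => (hw₀ u 0).trans (hw₁ u 0)
  suffices H : ∀ v, v ≤ T → (∀ u, cnt x u v ≤ c u) ∧
      rew w x v ≥ ρ * (rew w xπ v +
        ∑ u : U, max ((cnt x u v : ℝ) - (cnt xπ u v : ℝ)) 0 * wmax u) - B by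
    obtain ⟨hfeas, hrew⟩ := H T le_rfl
    refine ⟨hfeas, ?_⟩
    have hS : 0 ≤ ∑ u : U, max ((cnt x u T : ℝ) - (cnt xπ u T : ℝ)) 0 * wmax u :=
      Finset.sum_nonneg fun u _ => mul_nonneg (le_max_right _ _) (hwmax u)
    nlinarith [mul_nonneg hρ₀ hS]
  intro v
  induction v with
  | zero =>
    intro _
    constructor
    · intro u; simp [cnt]
    · simp [cnt, rew]
      linarith
  | succ n ih =>
    intro hv
    have hn : n ≤ T := Nat.le_of_succ_le hv
    obtain ⟨ihfeas, ihrew⟩ := ih hn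
    have h1 : 1 ≤ n + 1 := Nat.le_add_left 1 n
    by_cases hc : lomarCond wmax w ρ B xπ x xt (n + 1)
    · -- follow the RL suggestion
      have hx : x (n + 1) = xt (n + 1) := hfollow (n + 1) h1 hv hc
      unfold lomarCond at hc
      simp only [Nat.add_sub_cancel] at hc
      constructor
      · intro u
        rw [cnt_succ]
        by_cases hxu : x (n + 1) = some u
        · have hlt : cnt x u n < c u := by
            have := hxt (n + 1) h1 hv u (hx ▸ hxu)
            simpa using this
          rw [if_pos hxu]; omega
        · rw [if_neg hxu]; simpa using ihfeas u
      · have hsum : ∀ u : U, ((cnt x u (n + 1) : ℝ) - (cnt xπ u (n + 1) : ℝ)) =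
            (cnt x u n : ℝ) - (cnt xπ u (n + 1) : ℝ) +
              (if xt (n + 1) = some u then (1 : ℝ) else 0) := by
          intro u
          rw [cnt_succ, hx]
          push_cast
          ring
        have hrx : rew w x (n + 1) =
            rew w x n + ((xt (n + 1)).elim (0 : ℝ) fun u => w u (n + 1)) := by
          rw [rew_succ, hx]
        rw [hrx]
        simp only [hsum]
        exact hc
    · rcases hπ : xπ (n + 1) with _ | u₀
      · -- expert skips, so LOMAR skips
        have hx : x (n + 1) = none := hskip (n + 1) h1 hv hc (Or.inl hπ)
        have e1 : ∀ u, cnt x u (n + 1) = cnt x u n := by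
          intro u; rw [cnt_succ, hx]; simp
        have e2 : ∀ u, cnt xπ u (n + 1) = cnt xπ u n := by
          intro u; rw [cnt_succ, hπ]; simp
        have e3 : rew w x (n + 1) = rew w x n := by rw [rew_succ, hx]; simp
        have e4 : rew w xπ (n + 1) = rew w xπ n := by rw [rew_succ, hπ]; simp
        simp only [e1, e2, e3, e4]
        exact ⟨ihfeas, ihrew⟩
      · by_cases hcap : cnt x u₀ n < c u₀
        · -- follow the expert
          have hx : x (n + 1) = some u₀ :=
            hexpert (n + 1) h1 hv hc u₀ hπ (by simpa using hcap)
          constructor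
          · intro u
            rw [cnt_succ, hx]
            by_cases h : u₀ = u
            · subst h
              rw [if_pos rfl]; omega
            · rw [if_neg (by simpa using h)]; simpa using ihfeas u
          · have hsum : ∀ u : U, ((cnt x u (n + 1) : ℝ) - (cnt xπ u (n + 1) : ℝ)) =
                (cnt x u n : ℝ) - (cnt xπ u n : ℝ) := by
              intro u
              rw [cnt_succ, cnt_succ, hx, hπ]
              push_cast
              ring
            have hrx : rew w x (n + 1) = rew w x n + w u₀ (n + 1) := by
              rw [rew_succ, hx]; simp
            have hrπ : rew w xπ (n + 1) = rew w xπ n + w u₀ (n + 1) := by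
              rw [rew_succ, hπ]; simp
            have hw' : ρ * w u₀ (n + 1) ≤ w u₀ (n + 1) := by
              nlinarith [hw₀ u₀ (n + 1)]
            simp only [hsum, hrx, hrπ]
            nlinarith [ihrew]
        · -- LOMAR skips; expert plays a saturated item
          have hx : x (n + 1) = none :=
            hskip (n + 1) h1 hv hc (Or.inr ⟨u₀, hπ, by simpa using hcap⟩)
          have hπle : cnt xπ u₀ (n + 1) ≤ c u₀ := (cnt_mono xπ u₀ hv).trans (hπfeas u₀)
          have hπs : cnt xπ u₀ (n + 1) = cnt xπ u₀ n + 1 := by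
            rw [cnt_succ, hπ]; simp
          have hge : cnt xπ u₀ n + 1 ≤ cnt x u₀ n := by omega
          have e1 : ∀ u, cnt x u (n + 1) = cnt x u n := by
            intro u; rw [cnt_succ, hx]; simp
          have e2 : ∀ u, u ≠ u₀ → cnt xπ u (n + 1) = cnt xπ u n := by
            intro u h; rw [cnt_succ, hπ]
            simp [Ne.symm h]
          have hrx : rew w x (n + 1) = rew w x n := by rw [rew_succ, hx]; simp
          have hrπ : rew w xπ (n + 1) = rew w xπ n + w u₀ (n + 1) := by
            rw [rew_succ, hπ]; simp
          have key : ∀ u : U, max ((cnt x u (n + 1) : ℝ) - (cnt xπ u (n + 1) : ℝ)) 0 * wmax u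
              = max ((cnt x u n : ℝ) - (cnt xπ u n : ℝ)) 0 * wmax u -
                (if u = u₀ then wmax u₀ else 0) := by
            intro u
            by_cases h : u = u₀
            · subst h
              rw [e1, hπs, if_pos rfl]
              have hd : (cnt xπ u n : ℝ) + 1 ≤ (cnt x u n : ℝ) := by exact_mod_cast hge
              rw [max_eq_left (by push_cast; linarith), max_eq_left (by linarith)]
              push_cast
              ring
            · rw [e1, e2 u h, if_neg h]
              ring
          have hS : (∑ u : U, max ((cnt x u (n + 1) : ℝ) - (cnt xπ u (n + 1) : ℝ)) 0 * wmax u)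
              = (∑ u : U, max ((cnt x u n : ℝ) - (cnt xπ u n : ℝ)) 0 * wmax u) - wmax u₀ := by
            simp only [key, Finset.sum_sub_distrib]
            congr 1
            simp
          constructor
          · intro u; rw [e1]; exact ihfeas u
          · rw [hrx, hrπ, hS]
            have hb : ρ * w u₀ (n + 1) ≤ ρ * wmax u₀ :=
              mul_le_mul_of_nonneg_left (hw₁ u₀ (n + 1)) hρ₀
            nlinarith [ihrew]
end

section
/- Let U be a finite set, wmax : U → ℝ, ρ ∈ [0,1], B ≥ 0, counts n, m : U → ℕ, reals R, Rπ, an item u* ∈ U with n(u*) ≥ m(u*) + 1, and a reward w with 0 ≤ w ≤ wmax(u*). If R ≥ ρ·( Rπ + Σ_{u∈U} (n(u) − m(u))^+ · wmax(u) ) − B, then R ≥ ρ·( Rπ + w + Σ_{u∈U} (n(u) − m'(u))^+ · wmax(u) ) − B, where m'(u*) = m(u*) + 1 and m'(u) = m(u) for u ≠ u*. (This is the paper's Lemma 1: if the robustness invariant holds after step v−1 and the expert's chosen item is unavailable to LOMAR, then skipping preserves the invariant after the expert collects reward w for that item.) -/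
/-- **Lemma 1 (no-free-disposal skip step).**
If the robustness invariant holds after step `v-1` and the expert's chosen item `ustar`
is unavailable to LOMAR (LOMAR has matched it at least one more time than the expert),
then skipping preserves the invariant after the expert collects reward `w` for that item. -/
theorem lomar_skip_preserves_invariant
    {U : Type*} [Fintype U] [DecidableEq U]
    (wmax : U → ℝ) (ρ B : ℝ) (hρ₀ : 0 ≤ ρ) (hρ₁ : ρ ≤ 1) (hB : 0 ≤ B)
    (n m : U → ℕ) (R Rπ : ℝ) (ustar : U)
    (hcap : m ustar + 1 ≤ n ustar)
    (w : ℝ) (hw₀ : 0 ≤ w) (hw₁ : w ≤ wmax ustar)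
    (hinv : R ≥ ρ * (Rπ + ∑ u : U, max ((n u : ℝ) - (m u : ℝ)) 0 * wmax u) - B) :
    R ≥ ρ * (Rπ + w +
      ∑ u : U, max ((n u : ℝ) - ((Function.update m ustar (m ustar + 1)) u : ℝ)) 0 * wmax u)
      - B := by
  have hge : (1 : ℝ) ≤ (n ustar : ℝ) - (m ustar : ℝ) := by
    have : ((m ustar : ℝ) + 1) ≤ (n ustar : ℝ) := by exact_mod_cast hcap
    linarith
  have hsum : (∑ u : U, max ((n u : ℝ) - ((Function.update m ustar (m ustar + 1)) u : ℝ)) 0 * wmax u)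
      = (∑ u : U, max ((n u : ℝ) - (m u : ℝ)) 0 * wmax u) - wmax ustar := by
    have hsub : (∑ u : U, (max ((n u : ℝ) - (m u : ℝ)) 0 * wmax u -
        max ((n u : ℝ) - ((Function.update m ustar (m ustar + 1)) u : ℝ)) 0 * wmax u))
        = wmax ustar := by
      rw [Finset.sum_eq_single ustar]
      · simp only [Function.update_self]
        have h1 : max ((n ustar : ℝ) - (m ustar : ℝ)) 0 = (n ustar : ℝ) - (m ustar : ℝ) :=
          max_eq_left (by linarith)
        have h2 : max ((n ustar : ℝ) - ((m ustar + 1 : ℕ) : ℝ)) 0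
            = (n ustar : ℝ) - (m ustar : ℝ) - 1 := by
          push_cast
          rw [max_eq_left (by linarith)]
          ring
        rw [h1, h2]; ring
      · intro u _ hu
        rw [Function.update_of_ne hu]; ring
      · intro h; exact absurd (Finset.mem_univ ustar) h
    rw [Finset.sum_sub_distrib] at hsub
    linarith
  rw [hsum]
  have : ρ * (Rπ + w + ((∑ u : U, max ((n u : ℝ) - (m u : ℝ)) 0 * wmax u) - wmax ustar))
      ≤ ρ * (Rπ + ∑ u : U, max ((n u : ℝ) - (m u : ℝ)) 0 * wmax u) := by
    apply mul_le_mul_of_nonneg_left _ hρ₀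
    linarith
  linarith
end

section
/- Fix c ≥ 1. For all states a, b of length c (nondecreasing tuples of nonnegative reals) and every w ≥ 0: (Σ ins(a,w) − Σ a) − (Σ ins(b,w) − Σ b) ≥ H(ins(a,w), ins(b,w)) − H(a,b). (This is the single-offline-item form of the paper's free-disposal hedging lemma, Lemma 2: the difference between LOMAR's and the expert's marginal rewards from the same online item is at least the increase of the hedging term.) -/
/-- Free-disposal insertion: given a state `l` (a nondecreasing list of length `c`
of nonnegative reals) and a new reward `w ≥ 0`, `ins l w` is `l` itself if
`w ≤ l₁` (the smallest entry), and otherwise the nondecreasing rearrangement of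
`(l₂, …, l_c, w)` (the smallest entry is disposed). -/
noncomputable def ins (l : List ℝ) (w : ℝ) : List ℝ :=
  if w ≤ l.headI then l else l.tail.orderedInsert (· ≤ ·) w

/-- The hedging term for a single offline item of capacity `c`:
`H(a, b) = ( max_{1 ≤ i ≤ c} Σ_{j=1}^{i} (a_j − b_j) )⁺`. -/
noncomputable def hedge (c : ℕ) (a b : List ℝ) : ℝ :=
  max (sSup ((fun i => ∑ j ∈ Finset.range i, (a.getD j 0 - b.getD j 0)) ''
    Set.Icc 1 c)) 0

namespace HedgingAux

/-- Prefix sums of a list (with `getD` padding by `0`). -/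
noncomputable def P (l : List ℝ) (i : ℕ) : ℝ := ∑ j ∈ Finset.range i, l.getD j 0

lemma P_zero (l : List ℝ) : P l 0 = 0 := by simp [P]

lemma P_cons (x : ℝ) (t : List ℝ) (i : ℕ) : P (x :: t) (i+1) = x + P t i := by
  simp [P, Finset.sum_range_succ', add_comm]

lemma P_succ (l : List ℝ) (i : ℕ) : P l (i+1) = P l i + l.getD i 0 :=
  Finset.sum_range_succ _ _

lemma P_length (l : List ℝ) : P l l.length = l.sum := by
  induction l with
  | nil => simp [P]
  | cons x t ih => rw [List.length_cons, P_cons, ih, List.sum_cons]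

lemma P_one {a : List ℝ} (ha : a ≠ []) : P a 1 = a.headI := by
  obtain ⟨x, t, rfl⟩ := List.exists_cons_of_ne_nil ha
  rw [P_cons, P_zero]; simp

lemma headI_le_getD {l : List ℝ} (h : l.Pairwise (· ≤ ·)) {i : ℕ} (hi : i < l.length) :
    l.headI ≤ l.getD i 0 := by
  match l, i with
  | x :: t, 0 => simp
  | x :: t, (k+1) =>
    simp only [List.headI, List.getD_cons_succ]
    have hk : k < t.length := by simpa using hi
    rw [List.getD_eq_getElem _ _ hk]
    exact (List.pairwise_cons.mp h).1 _ (List.getElem_mem hk)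

lemma P_orderedInsert (w : ℝ) :
    ∀ (l : List ℝ), l.Pairwise (· ≤ ·) → ∀ i, i < l.length →
      P (l.orderedInsert (· ≤ ·) w) (i+1) = min (P l (i+1)) (P l i + w) := by
  intro l
  induction l with
  | nil => intro _ i hi; simp at hi
  | cons x t ih =>
    intro hs i hi
    rw [List.orderedInsert]
    split_ifs with h
    · -- w ≤ x : result is w :: x :: t
      have hge : w ≤ (x :: t).getD i 0 := le_trans h (headI_le_getD hs hi)
      rw [P_cons, min_eq_right (by rw [P_succ]; linarith)]
      ring
    · -- x < w : result is x :: orderedInsert t w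
      push_neg at h
      cases i with
      | zero =>
        simp only [P_cons, P_zero, add_zero, zero_add]
        exact (min_eq_left h.le).symm
      | succ k =>
        have hk : k < t.length := by simpa using hi
        rw [P_cons, ih hs.of_cons k hk, P_cons, P_cons]
        rw [← min_add_add_left]
        congr 1
        ring

lemma sum_orderedInsert (w : ℝ) (l : List ℝ) :
    (l.orderedInsert (· ≤ ·) w).sum = w + l.sum := by
  have := (List.perm_orderedInsert (· ≤ ·) w l).sum_eq
  simpa using this

lemma ins_length {a : List ℝ} (ha : a ≠ []) (w : ℝ) : (ins a w).length = a.length := by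
  rw [ins]
  split_ifs with h
  · rfl
  · rw [List.orderedInsert_length, List.length_tail]
    have := List.length_pos_iff.mpr ha
    omega

lemma ins_sum {a : List ℝ} (ha : a ≠ []) (w : ℝ) :
    (ins a w).sum = a.sum + max (w - a.headI) 0 := by
  rw [ins]
  split_ifs with h
  · rw [max_eq_right (by linarith)]; ring
  · obtain ⟨x, t, rfl⟩ := List.exists_cons_of_ne_nil ha
    push_neg at h
    simp only [List.headI] at h ⊢
    rw [List.tail_cons, sum_orderedInsert, List.sum_cons,
      max_eq_left (by linarith)]
    ring

lemma ins_of_le {a : List ℝ} {w : ℝ} (h : w ≤ a.headI) : ins a w = a := if_pos h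

lemma P_ins {a : List ℝ} (hs : a.Pairwise (· ≤ ·)) (ha : a ≠ []) {w : ℝ}
    (hw : ¬ w ≤ a.headI) {i : ℕ} (hi : i < a.length) :
    P (ins a w) i = min (P a (i+1) - a.headI) (P a i + w - a.headI) := by
  push_neg at hw
  rw [ins, if_neg (by push_neg; exact hw)]
  obtain ⟨x, t, rfl⟩ := List.exists_cons_of_ne_nil ha
  simp only [List.headI] at hw ⊢
  rw [List.tail_cons]
  cases i with
  | zero =>
    rw [P_zero, P_cons, P_zero, P_zero]
    rw [show x + 0 - x = (0:ℝ) by ring, show (0:ℝ) + w - x = w - x by ring]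
    rw [min_eq_left (by linarith)]
  | succ k =>
    have hk : k < t.length := by simpa using hi
    rw [P_orderedInsert w t hs.of_cons k hk, P_cons, P_cons]
    rw [show x + P t (k+1) - x = P t (k+1) by ring,
      show x + P t k + w - x = P t k + w by ring]

lemma P_ins_full {a : List ℝ} (ha : a ≠ []) (w : ℝ) :
    P (ins a w) a.length = a.sum + max (w - a.headI) 0 := by
  rw [← ins_length ha w, P_length, ins_sum ha]

lemma hedge_eq (c : ℕ) (a b : List ℝ) :
    hedge c a b = max (sSup ((fun i => P a i - P b i) '' Set.Icc 1 c)) 0 := by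
  have : (fun i => ∑ j ∈ Finset.range i, (a.getD j 0 - b.getD j 0)) =
      (fun i => P a i - P b i) := by
    funext i
    rw [P, P, ← Finset.sum_sub_distrib]
  rw [hedge, this]

lemma hedge_nonneg (c : ℕ) (a b : List ℝ) : 0 ≤ hedge c a b := le_max_right _ _

lemma le_hedge {c : ℕ} (a b : List ℝ) {i : ℕ} (h1 : 1 ≤ i) (h2 : i ≤ c) :
    P a i - P b i ≤ hedge c a b := by
  rw [hedge_eq]
  refine le_trans (le_csSup ?_ ?_) (le_max_left _ _)
  · exact ((Set.finite_Icc 1 c).image _).bddAbove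
  · exact Set.mem_image_of_mem _ ⟨h1, h2⟩

lemma hedge_le {c : ℕ} (hc : 1 ≤ c) (a b : List ℝ) {M : ℝ} (h0 : 0 ≤ M)
    (h : ∀ i, 1 ≤ i → i ≤ c → P a i - P b i ≤ M) : hedge c a b ≤ M := by
  rw [hedge_eq]
  refine max_le (csSup_le ⟨P a 1 - P b 1, Set.mem_image_of_mem _ ⟨le_refl 1, hc⟩⟩ ?_) h0
  rintro x ⟨i, ⟨hi1, hi2⟩, rfl⟩
  exact h i hi1 hi2

end HedgingAux

open HedgingAux in
/-- **Lemma 2, single-offline-item form (free-disposal hedging lemma).**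
For all states `a`, `b` of length `c ≥ 1` and every `w ≥ 0`, the difference between
LOMAR's and the expert's marginal rewards from the same online item is at least the
increase of the hedging term:
`(Σ ins(a,w) − Σ a) − (Σ ins(b,w) − Σ b) ≥ H(ins(a,w), ins(b,w)) − H(a,b)`. -/
theorem hedging_lemma (c : ℕ) (hc : 1 ≤ c) (a b : List ℝ)
    (ha_len : a.length = c) (hb_len : b.length = c)
    (ha_sorted : a.Pairwise (· ≤ ·)) (hb_sorted : b.Pairwise (· ≤ ·))
    (ha_nonneg : ∀ x ∈ a, (0 : ℝ) ≤ x) (hb_nonneg : ∀ x ∈ b, (0 : ℝ) ≤ x)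
    (w : ℝ) (hw : 0 ≤ w) :
    ((ins a w).sum - a.sum) - ((ins b w).sum - b.sum) ≥
      hedge c (ins a w) (ins b w) - hedge c a b := by
  have hane : a ≠ [] := by intro h; rw [h] at ha_len; simp at ha_len; omega
  have hbne : b ≠ [] := by intro h; rw [h] at hb_len; simp at hb_len; omega
  have hH0 : 0 ≤ hedge c a b := hedge_nonneg c a b
  have hH1 : a.headI - b.headI ≤ hedge c a b := by
    have := le_hedge a b (le_refl 1) hc
    rwa [P_one hane, P_one hbne] at this
  have hsum : ((ins a w).sum - a.sum) - ((ins b w).sum - b.sum) =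
      max (w - a.headI) 0 - max (w - b.headI) 0 := by
    rw [ins_sum hane, ins_sum hbne]; ring
  rw [ge_iff_le, hsum]
  have key : hedge c (ins a w) (ins b w) ≤
      (max (w - a.headI) 0 - max (w - b.headI) 0) + hedge c a b := by
    apply hedge_le hc
    · -- nonnegativity of the bound
      rcases le_total (w - b.headI) 0 with h | h
      · rw [max_eq_right h]
        have := le_max_right (w - a.headI) (0:ℝ)
        linarith
      · rw [max_eq_left h]
        have := le_max_left (w - a.headI) (0:ℝ)
        linarith
    · intro i hi1 hi2
      have hAle : ∀ j, 1 ≤ j → j ≤ c → P a j - P b j ≤ hedge c a b :=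
        fun j h1 h2 => le_hedge a b h1 h2
      have hPac : P a c = a.sum := by rw [← ha_len, P_length]
      have hPbc : P b c = b.sum := by rw [← hb_len, P_length]
      have hfa : ¬ w ≤ a.headI → P (ins a w) c = P a c + (w - a.headI) := by
        intro h
        rw [← ha_len, P_ins_full hane, P_length,
          max_eq_left (by push_neg at h; linarith)]
      have hfb : ¬ w ≤ b.headI → P (ins b w) c = P b c + (w - b.headI) := by
        intro h
        rw [← hb_len, P_ins_full hbne, P_length,
          max_eq_left (by push_neg at h; linarith)]
      by_cases hwa : w ≤ a.headI <;> by_cases hwb : w ≤ b.headI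
      · -- both stay
        rw [ins_of_le hwa, ins_of_le hwb, max_eq_right (by linarith),
          max_eq_right (by linarith)]
        have := hAle i hi1 hi2
        linarith
      · -- a stays, b inserts
        rw [ins_of_le hwa, max_eq_right (by linarith),
          max_eq_left (by push_neg at hwb; linarith)]
        rcases eq_or_lt_of_le hi2 with heq | hic
        · rw [heq, hfb hwb]
          have h2 := hAle c hc (le_refl c)
          linarith
        · have hib : i < b.length := by omega
          rw [P_ins hb_sorted hbne hwb hib]
          rcases min_cases (P b (i+1) - b.headI) (P b i + w - b.headI) with
            ⟨hmin, _⟩ | ⟨hmin, _⟩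
          · rw [hmin]
            have hwa' : w ≤ a.getD i 0 :=
              le_trans hwa (headI_le_getD ha_sorted (by omega))
            have hPa : P a (i+1) = P a i + a.getD i 0 := P_succ a i
            have h2 := hAle (i+1) (by omega) (by omega)
            linarith
          · rw [hmin]
            have h2 := hAle i hi1 hi2
            linarith
      · -- a inserts, b stays
        rw [ins_of_le hwb, max_eq_left (by push_neg at hwa; linarith),
          max_eq_right (by linarith)]
        rcases eq_or_lt_of_le hi2 with heq | hic
        · rw [heq, hfa hwa]
          have h2 := hAle c hc (le_refl c)
          linarith
        · have hia : i < a.length := by omega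
          rw [P_ins ha_sorted hane hwa hia]
          have h2 := hAle i hi1 hi2
          have := min_le_right (P a (i+1) - a.headI) (P a i + w - a.headI)
          linarith
      · -- both insert
        rw [max_eq_left (by push_neg at hwa; linarith),
          max_eq_left (by push_neg at hwb; linarith)]
        rcases eq_or_lt_of_le hi2 with heq | hic
        · rw [heq, hfa hwa, hfb hwb]
          have h2 := hAle c hc (le_refl c)
          linarith
        · have hia : i < a.length := by omega
          have hib : i < b.length := by omega
          rw [P_ins ha_sorted hane hwa hia, P_ins hb_sorted hbne hwb hib]
          rcases min_cases (P b (i+1) - b.headI) (P b i + w - b.headI) with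
            ⟨hmin, _⟩ | ⟨hmin, _⟩
          · rw [hmin]
            have h2 := hAle (i+1) (by omega) (by omega)
            have := min_le_left (P a (i+1) - a.headI) (P a i + w - a.headI)
            linarith
          · rw [hmin]
            have h2 := hAle i hi1 hi2
            have := min_le_right (P a (i+1) - a.headI) (P a i + w - a.headI)
            linarith
  linarith
end

section
/- Fix c ≥ 1. For all states a, b of length c (nondecreasing tuples of nonnegative reals) and every w ≥ 0 with w ≥ a_1 and w ≥ b_1: H(ins(a,w), ins(b,w)) − H(a,b) ≤ b_1 − a_1. (Case 2 of the proof of the free-disposal hedging lemma: when the new reward displaces the smallest entry of both lists.) -/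
private lemma sum_getD_eq_take (l : List ℝ) (i : ℕ) :
    ∑ j ∈ Finset.range i, l.getD j 0 = (l.take i).sum := by
  induction l generalizing i with
  | nil => simp
  | cons x t ih =>
    cases i with
    | zero => simp
    | succ n =>
      rw [Finset.sum_range_succ']
      simp only [List.getD_cons_succ, List.getD_cons_zero, List.take_succ_cons,
        List.sum_cons]
      rw [ih, add_comm]

private lemma insert_sum (w : ℝ) (l : List ℝ) :
    (l.orderedInsert (· ≤ ·) w).sum = w + l.sum := by
  have := (List.perm_orderedInsert (· ≤ ·) w l).sum_eq
  simpa using this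

private lemma insert_take_sum (w : ℝ) :
    ∀ (l : List ℝ), l.Pairwise (· ≤ ·) → ∀ i, i < l.length →
    ((l.orderedInsert (· ≤ ·) w).take (i + 1)).sum
      = min ((l.take (i + 1)).sum) ((l.take i).sum + w) := by
  intro l
  induction l with
  | nil => intro _ i hi; simp at hi
  | cons x t ih =>
    intro hs i hi
    simp only [List.orderedInsert]
    split_ifs with h
    · -- w ≤ x, result is w :: x :: t
      have hg : w ≤ (x :: t).getD i 0 := by
        rw [List.getD_eq_getElem _ _ hi]
        cases i with
        | zero => simpa using h
        | succ n =>
          have hn : n < t.length := by simpa using hi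
          have : x ≤ t[n] := (List.pairwise_cons.mp hs).1 _ (List.getElem_mem hn)
          simp only [List.getElem_cons_succ]
          linarith
      have hsum : ((x :: t).take (i + 1)).sum
          = ((x :: t).take i).sum + (x :: t).getD i 0 := by
        rw [← sum_getD_eq_take, ← sum_getD_eq_take, Finset.sum_range_succ]
      rw [hsum, min_eq_right (by linarith)]
      simp [List.take_cons]
      ring
    · cases i with
      | zero =>
        have hx : x ≤ w := le_of_not_ge h
        simp [min_eq_left hx]
      | succ k =>
        have hk : k < t.length := by simpa using hi
        have hs' : t.Pairwise (· ≤ ·) := (List.pairwise_cons.mp hs).2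
        rw [List.take_succ_cons, List.sum_cons, ih hs' k hk, List.take_succ_cons,
          List.take_succ_cons, List.sum_cons, List.sum_cons, ← min_add_add_left, add_assoc]

private lemma ins_eq_orderedInsert (a : List ℝ) (ha : a.Pairwise (· ≤ ·)) (hne : a ≠ [])
    (w : ℝ) (hwa : a.headI ≤ w) :
    ins a w = a.tail.orderedInsert (· ≤ ·) w := by
  unfold ins
  split_ifs with h
  · have hw : w = a.headI := le_antisymm h hwa
    subst hw
    cases a with
    | nil => exact absurd rfl hne
    | cons x t =>
      cases t with
      | nil => simp [List.orderedInsert]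
      | cons y s =>
        have hxy : x ≤ y := (List.pairwise_cons.mp ha).1 _ (by simp)
        simp [List.orderedInsert, hxy]
  · rfl

private lemma min_sub_min_le (x y u v : ℝ) : min x y - min u v ≤ max (x - u) (y - v) := by
  rcases le_total u v with h | h
  · rw [min_eq_left h]
    calc min x y - u ≤ x - u := by linarith [min_le_left x y]
      _ ≤ _ := le_max_left _ _
  · rw [min_eq_right h]
    calc min x y - v ≤ y - v := by linarith [min_le_right x y]
      _ ≤ _ := le_max_right _ _

private lemma tail_take_sum (l : List ℝ) (hne : l ≠ []) (m : ℕ) :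
    (l.take (m + 1)).sum = l.headI + (l.tail.take m).sum := by
  cases l with
  | nil => exact absurd rfl hne
  | cons x t => simp [List.take_cons]
private lemma take_one_sum (l : List ℝ) (hne : l ≠ []) : (l.take 1).sum = l.headI := by
  cases l with
  | nil => exact absurd rfl hne
  | cons x t => simp

private lemma sum_eq_headI_add_tail (l : List ℝ) (hne : l ≠ []) :
    l.sum = l.headI + l.tail.sum := by
  cases l with
  | nil => exact absurd rfl hne
  | cons x t => simp

/-- **Case 2 of the free-disposal hedging lemma.**
When the new reward `w` displaces the smallest entry of both lists
(`w ≥ a₁` and `w ≥ b₁`):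
`H(ins(a,w), ins(b,w)) − H(a,b) ≤ b₁ − a₁`. -/
theorem hedging_case2 (c : ℕ) (hc : 1 ≤ c) (a b : List ℝ)
    (ha_len : a.length = c) (hb_len : b.length = c)
    (ha_sorted : a.Pairwise (· ≤ ·)) (hb_sorted : b.Pairwise (· ≤ ·))
    (ha_nonneg : ∀ x ∈ a, (0 : ℝ) ≤ x) (hb_nonneg : ∀ x ∈ b, (0 : ℝ) ≤ x)
    (w : ℝ) (hw : 0 ≤ w) (hwa : a.headI ≤ w) (hwb : b.headI ≤ w) :
    hedge c (ins a w) (ins b w) - hedge c a b ≤ b.headI - a.headI := by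
  have hane : a ≠ [] := by intro h; rw [h] at ha_len; simp at ha_len; omega
  have hbne : b ≠ [] := by intro h; rw [h] at hb_len; simp at hb_len; omega
  rw [ins_eq_orderedInsert a ha_sorted hane w hwa,
      ins_eq_orderedInsert b hb_sorted hbne w hwb]
  set A := a.tail.orderedInsert (· ≤ ·) w with hA
  set B := b.tail.orderedInsert (· ≤ ·) w with hB
  set g : ℕ → ℝ := fun i => ∑ j ∈ Finset.range i, (a.getD j 0 - b.getD j 0) with hgdef
  set f : ℕ → ℝ := fun i => ∑ j ∈ Finset.range i, (A.getD j 0 - B.getD j 0) with hfdef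
  have hgm : ∀ m, g m = (a.take m).sum - (b.take m).sum := by
    intro m
    rw [hgdef]
    simp only
    rw [Finset.sum_sub_distrib, sum_getD_eq_take, sum_getD_eq_take]
  have hfm : ∀ m, f m = (A.take m).sum - (B.take m).sum := by
    intro m
    rw [hfdef]
    simp only
    rw [Finset.sum_sub_distrib, sum_getD_eq_take, sum_getD_eq_take]
  have h1mem : (1 : ℕ) ∈ Set.Icc 1 c := ⟨le_refl 1, hc⟩
  have hcmem : c ∈ Set.Icc 1 c := ⟨hc, le_refl c⟩
  have hle_hedge : ∀ i ∈ Set.Icc 1 c, g i ≤ hedge c a b := by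
    intro i hi
    refine le_trans (le_csSup (((Set.finite_Icc 1 c).image g).bddAbove)
      (Set.mem_image_of_mem g hi)) (le_max_left _ _)
  have hstep1 : a.headI - b.headI ≤ hedge c a b := by
    have h1 := hle_hedge 1 h1mem
    rw [hgm 1, take_one_sum a hane, take_one_sum b hbne] at h1
    exact h1
  have hAlen : A.length = c := by
    rw [hA, List.orderedInsert_length, List.length_tail, ha_len]; omega
  have hBlen : B.length = c := by
    rw [hB, List.orderedInsert_length, List.length_tail, hb_len]; omega
  have hatail : a.tail.length = c - 1 := by rw [List.length_tail, ha_len]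
  have hbtail : b.tail.length = c - 1 := by rw [List.length_tail, hb_len]
  have key : ∀ i ∈ Set.Icc 1 c, f i ≤ hedge c a b + (b.headI - a.headI) := by
    rintro i ⟨hi1, hic⟩
    rcases eq_or_lt_of_le hic with rfl | hilt
    · -- i = c : full sums
      have htA : (A.take i).sum = A.sum := by
        rw [List.take_of_length_le (le_of_eq hAlen)]
      have htB : (B.take i).sum = B.sum := by
        rw [List.take_of_length_le (le_of_eq hBlen)]
      have hsA : A.sum = w + a.tail.sum := insert_sum w a.tail
      have hsB : B.sum = w + b.tail.sum := insert_sum w b.tail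
      have hga : a.sum = a.headI + a.tail.sum := sum_eq_headI_add_tail a hane
      have hgb : b.sum = b.headI + b.tail.sum := sum_eq_headI_add_tail b hbne
      have hgc := hle_hedge i ⟨hi1, le_refl i⟩
      rw [hgm i, List.take_of_length_le (le_of_eq ha_len),
        List.take_of_length_le (le_of_eq hb_len)] at hgc
      rw [hfm i, htA, htB, hsA, hsB]
      linarith
    · -- i < c
      obtain ⟨k, rfl⟩ : ∃ k, i = k + 1 := ⟨i - 1, by omega⟩
      have hka : k < a.tail.length := by omega
      have hkb : k < b.tail.length := by omega
      have hA1 := insert_take_sum w a.tail ha_sorted.tail k hka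
      have hB1 := insert_take_sum w b.tail hb_sorted.tail k hkb
      have hta1 : (a.take (k + 1 + 1)).sum = a.headI + (a.tail.take (k + 1)).sum :=
        tail_take_sum a hane (k + 1)
      have hta0 : (a.take (k + 1)).sum = a.headI + (a.tail.take k).sum :=
        tail_take_sum a hane k
      have htb1 : (b.take (k + 1 + 1)).sum = b.headI + (b.tail.take (k + 1)).sum :=
        tail_take_sum b hbne (k + 1)
      have htb0 : (b.take (k + 1)).sum = b.headI + (b.tail.take k).sum :=
        tail_take_sum b hbne k
      have hmin := min_sub_min_le ((a.tail.take (k + 1)).sum) ((a.tail.take k).sum + w)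
        ((b.tail.take (k + 1)).sum) ((b.tail.take k).sum + w)
      have hg1 := hle_hedge (k + 1 + 1) ⟨by omega, by omega⟩
      have hg0 := hle_hedge (k + 1) ⟨by omega, by omega⟩
      rw [hgm] at hg1 hg0
      rw [hfm, hA1, hB1]
      have hmax : max ((a.tail.take (k + 1)).sum - (b.tail.take (k + 1)).sum)
          (((a.tail.take k).sum + w) - ((b.tail.take k).sum + w))
          ≤ hedge c a b + (b.headI - a.headI) := by
        apply max_le <;> linarith
      linarith
  -- conclude
  rw [hedge]
  have himg_ne : ((f '' Set.Icc 1 c)).Nonempty := ⟨f 1, Set.mem_image_of_mem f h1mem⟩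
  have hsup : sSup (f '' Set.Icc 1 c) ≤ hedge c a b + (b.headI - a.headI) := by
    apply csSup_le himg_ne
    rintro x ⟨i, hi, rfl⟩
    exact key i hi
  have h0 : (0 : ℝ) ≤ hedge c a b + (b.headI - a.headI) := by linarith
  have := max_le hsup h0
  linarith
end

section
/- For every ρ ∈ [0,1], every B ≥ 0, every expert strategy x^π with x^π_v ∈ U for each v, and every sequence of RL suggestions x̃_1, …, x̃_T with x̃_v ∈ U ∪ {skip}, the strategy x produced by LOMAR's free-disposal switching rule satisfies, at every step v ∈ {0, 1, …, T}, the invariant R_v ≥ ρ·( R^π_v + G̃((V_{u,v})_{u∈U}, (V^π_{u,v})_{u∈U}) ) − B. -/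
/-- `Vset x u v` = `V_{u,v}`: the set of online items among steps `1, …, v`
that strategy `x` matches to offline item `u`. -/
def Vset {U : Type*} [DecidableEq U] (x : ℕ → Option U) (u : U) (v : ℕ) : Finset ℕ :=
  (Finset.Icc 1 v).filter fun v' => x v' = some u

/-- `fRew cu wt S` = `f_u(S)`: the reward collected at an offline item of capacity `cu`
in the free-disposal model, i.e. the maximum over subsets `E ⊆ S` with `|E| ≤ cu` of
`Σ_{v'∈E} wt v'`. -/
noncomputable def fRew (cu : ℕ) (wt : ℕ → ℝ) (S : Finset ℕ) : ℝ :=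
  sSup {x | ∃ E ⊆ S, E.card ≤ cu ∧ x = ∑ v' ∈ E, wt v'}

/-- `topList cu wt S`: the rewards of a maximum-reward subset of `S` of size `≤ cu`
(i.e. the top `cu` rewards), sorted increasingly and padded with zeros to length `cu`;
its `j`-th entry (0-indexed) is `e_{u,j+1}(S)`. -/
noncomputable def topList (cu : ℕ) (wt : ℕ → ℝ) (S : Finset ℕ) : List ℝ :=
  let l := (S.val.map wt).sort (· ≤ ·)
  List.replicate (cu - l.length) 0 ++ l.drop (l.length - cu)

/-- The hedging term
`G̃((V_u),(V^π_u)) = Σ_{u∈U} ( max_{1≤i≤c(u)} Σ_{j=1}^{i} (e_{u,j}(V_u) − e_{u,j}(V^π_u)) )⁺`. -/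
noncomputable def hedgeSum {U : Type*} [Fintype U] (c : U → ℕ) (w : U → ℕ → ℝ)
    (V Vπ : U → Finset ℕ) : ℝ :=
  ∑ u : U, max (sSup ((fun i => ∑ j ∈ Finset.range i,
      ((topList (c u) (w u) (V u)).getD j 0 - (topList (c u) (w u) (Vπ u)).getD j 0)) ''
    Set.Icc 1 (c u))) 0

/-- `totalRew c w x v` = `R_v = Σ_{u∈U} f_u(V_{u,v})`: the cumulative reward of
strategy `x` after step `v` in the free-disposal model. -/
noncomputable def totalRew {U : Type*} [Fintype U] [DecidableEq U] (c : U → ℕ)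
    (w : U → ℕ → ℝ) (x : ℕ → Option U) (v : ℕ) : ℝ :=
  ∑ u : U, fRew (c u) (w u) (Vset x u v)

/-- LOMAR's free-disposal switching condition at step `v`: the RL suggestion `x̃_v`
may be followed iff `R_{v−1} + Δf_{x̃_v} ≥ ρ·(R^π_v + G_v) − B`, where `Δf_{x̃_v}` is
the marginal reward of the RL decision and `G_v` is the hedging term computed with
LOMAR's sets updated by the RL decision and the expert's sets after step `v`. -/
noncomputable def fdCond {U : Type*} [Fintype U] [DecidableEq U] (c : U → ℕ)
    (w : U → ℕ → ℝ) (ρ B : ℝ) (xπ : ℕ → U) (x xt : ℕ → Option U) (v : ℕ) : Prop :=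
  totalRew c w x (v - 1) +
    ((xt v).elim (0 : ℝ) fun u =>
      fRew (c u) (w u) (insert v (Vset x u (v - 1))) - fRew (c u) (w u) (Vset x u (v - 1))) ≥
  ρ * (totalRew c w (fun v' => some (xπ v')) v +
    hedgeSum c w
      (fun u => if xt v = some u then insert v (Vset x u (v - 1)) else Vset x u (v - 1))
      (fun u => Vset (fun v' => some (xπ v')) u v)) - B

open Finset

noncomputable def fmSet (m : ℕ) (wt : ℕ → ℝ) (S : Finset ℕ) : Finset ℝ :=
  (S.powerset.filter fun E => E.card ≤ m).image fun E => ∑ v ∈ E, wt v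

lemma fmSet_nonempty (m : ℕ) (wt : ℕ → ℝ) (S : Finset ℕ) : (fmSet m wt S).Nonempty :=
  ⟨0, Finset.mem_image.2 ⟨∅, by simp, rfl⟩⟩

noncomputable def fm (m : ℕ) (wt : ℕ → ℝ) (S : Finset ℕ) : ℝ :=
  (fmSet m wt S).max' (fmSet_nonempty m wt S)

lemma sum_le_fm {m : ℕ} (wt : ℕ → ℝ) {S E : Finset ℕ} (hE : E ⊆ S) (hcard : E.card ≤ m) :
    ∑ v ∈ E, wt v ≤ fm m wt S := by
  unfold fm fmSet
  apply Finset.le_max'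
  exact Finset.mem_image.2 ⟨E, Finset.mem_filter.2 ⟨Finset.mem_powerset.2 hE, hcard⟩, rfl⟩

lemma fm_exists (m : ℕ) (wt : ℕ → ℝ) (S : Finset ℕ) :
    ∃ E ⊆ S, E.card ≤ m ∧ fm m wt S = ∑ v ∈ E, wt v := by
  have h := Finset.max'_mem _ (fmSet_nonempty m wt S)
  obtain ⟨E, hE, hsum⟩ := Finset.mem_image.1 h
  rw [Finset.mem_filter, Finset.mem_powerset] at hE
  exact ⟨E, hE.1, hE.2, hsum.symm⟩

lemma fRew_eq_fm (m : ℕ) (wt : ℕ → ℝ) (S : Finset ℕ) : fRew m wt S = fm m wt S := by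
  have hset : {x | ∃ E ⊆ S, E.card ≤ m ∧ x = ∑ v' ∈ E, wt v'} = ↑(fmSet m wt S) := by
    ext x
    simp only [fmSet, Set.mem_setOf_eq, Finset.coe_image, Set.mem_image, Finset.mem_coe,
      Finset.mem_filter, Finset.mem_powerset]
    constructor
    · rintro ⟨E, h1, h2, rfl⟩; exact ⟨E, ⟨h1, h2⟩, rfl⟩
    · rintro ⟨E, ⟨h1, h2⟩, rfl⟩; exact ⟨E, h1, h2, rfl⟩
  rw [fRew, hset]
  exact Finset.Nonempty.csSup_eq_max' _

lemma fm_zero (wt : ℕ → ℝ) (S : Finset ℕ) : fm 0 wt S = 0 := by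
  obtain ⟨E, _, hc, he⟩ := fm_exists 0 wt S
  have hE : E = ∅ := Finset.card_eq_zero.1 (Nat.le_zero.1 hc)
  have h0 : fm 0 wt S ≤ 0 := by rw [he, hE]; simp
  exact le_antisymm h0 (by simpa using sum_le_fm (m := 0) (S := S) (E := ∅) wt (by simp) (by simp))

lemma fm_empty (m : ℕ) (wt : ℕ → ℝ) : fm m wt ∅ = 0 := by
  obtain ⟨E, hE, _, he⟩ := fm_exists m wt ∅
  have hE' : E = ∅ := Finset.subset_empty.1 hE
  have h0 : fm m wt ∅ ≤ 0 := by rw [he, hE']; simp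
  exact le_antisymm h0 (by simpa using sum_le_fm (m := m) (S := (∅:Finset ℕ)) (E := ∅) wt (by simp) (by simp))

lemma fm_mono_set {m : ℕ} (wt : ℕ → ℝ) {S S' : Finset ℕ} (h : S ⊆ S') :
    fm m wt S ≤ fm m wt S' := by
  obtain ⟨E, hE, hc, he⟩ := fm_exists m wt S
  rw [he]; exact sum_le_fm wt (hE.trans h) hc

lemma fm_insert {m : ℕ} (wt : ℕ → ℝ) {S : Finset ℕ} {v : ℕ} (hv : v ∉ S) (hm : 1 ≤ m) :
    fm m wt (insert v S) = max (fm m wt S) (wt v + fm (m-1) wt S) := by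
  apply le_antisymm
  · obtain ⟨E, hE, hc, he⟩ := fm_exists m wt (insert v S)
    rw [he]
    by_cases hvE : v ∈ E
    · have h1 : E.erase v ⊆ S := fun x hx => by
        have := hE (Finset.erase_subset _ _ hx)
        rcases Finset.mem_insert.1 this with h | h
        · exact absurd h (Finset.ne_of_mem_erase hx)
        · exact h
      have h2 : (E.erase v).card ≤ m - 1 := by
        have := Finset.card_erase_of_mem hvE
        omega
      have h3 : ∑ x ∈ E, wt x = wt v + ∑ x ∈ E.erase v, wt x := by
        rw [Finset.add_sum_erase _ _ hvE]
      rw [h3]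
      exact le_max_of_le_right (by linarith [sum_le_fm (m := m - 1) wt h1 h2])
    · have h1 : E ⊆ S := fun x hx => by
        rcases Finset.mem_insert.1 (hE hx) with h | h
        · exact absurd (h ▸ hx) hvE
        · exact h
      exact le_max_of_le_left (sum_le_fm wt h1 hc)
  · apply max_le
    · exact fm_mono_set wt (Finset.subset_insert _ _)
    · obtain ⟨E, hE, hc, he⟩ := fm_exists (m-1) wt S
      rw [he]
      have hvE : v ∉ E := fun h => hv (hE h)
      rw [show wt v + ∑ x ∈ E, wt x = ∑ x ∈ insert v E, wt x from (Finset.sum_insert hvE).symm]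
      apply sum_le_fm wt (Finset.insert_subset_iff.2 ⟨Finset.mem_insert_self _ _,
        hE.trans (Finset.subset_insert _ _)⟩)
      have := Finset.card_insert_le v E
      omega

lemma length_topList (k : ℕ) (wt : ℕ → ℝ) (S : Finset ℕ) : (topList k wt S).length = k := by
  simp only [topList, List.length_append, List.length_replicate, List.length_drop]
  omega

lemma topList_drop (k i : ℕ) (wt : ℕ → ℝ) (S : Finset ℕ) :
    (topList k wt S).drop i = topList (k - i) wt S := by
  rcases le_or_gt i k with hik | hik
  · simp only [topList]
    set l := ((S.val.map wt).sort (· ≤ ·)) with hl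
    rw [List.drop_append, List.drop_replicate, List.length_replicate,
      List.drop_drop]
    congr 1
    · congr 1; omega
    · congr 1; omega
  · have h1 : (topList k wt S).drop i = [] :=
      List.drop_eq_nil_of_le (by rw [length_topList]; omega)
    have h2 : (topList (k - i) wt S).length = 0 := by rw [length_topList]; omega
    rw [h1, List.length_eq_zero_iff.1 h2]

lemma sum_topList_aux (k : ℕ) (wt : ℕ → ℝ) :
    ∀ n (S : Finset ℕ), S.card = n → (∀ x ∈ S, 0 ≤ wt x) →
      (topList k wt S).sum = fm k wt S := by
  intro n
  induction n using Nat.strong_induction_on with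
  | _ n ih =>
  intro S hn hw
  have hlen : ((S.val.map wt).sort (· ≤ ·)).length = S.card := by
    rw [Multiset.length_sort, Multiset.card_map]; rfl
  by_cases hcard : S.card ≤ k
  · have hsum : (topList k wt S).sum = ∑ x ∈ S, wt x := by
      simp only [topList]
      have e0 : ((S.val.map wt).sort (· ≤ ·)).length - k = 0 := by rw [hlen]; omega
      rw [e0, List.drop_zero, List.sum_append, List.sum_replicate, smul_zero, zero_add]
      have : (((S.val.map wt).sort (· ≤ ·)) : Multiset ℝ).sum = (S.val.map wt).sum := by
        rw [Multiset.sort_eq]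
      rw [← Multiset.sum_coe, this]
      rfl
    have hfm : fm k wt S = ∑ x ∈ S, wt x := by
      apply le_antisymm
      · obtain ⟨E, hE, _, he⟩ := fm_exists k wt S
        rw [he]
        exact Finset.sum_le_sum_of_subset_of_nonneg hE (fun x hx _ => hw x hx)
      · exact sum_le_fm wt subset_rfl hcard
    rw [hsum, hfm]
  · -- S.card > k : remove a minimal element
    have hne : S.Nonempty := Finset.card_pos.1 (by omega)
    obtain ⟨v, hvS, hmin⟩ := Finset.exists_min_image S wt hne
    have hcarde : (S.erase v).card = S.card - 1 := Finset.card_erase_of_mem hvS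
    -- fm unchanged
    have hfm : fm k wt S = fm k wt (S.erase v) := by
      apply le_antisymm
      · obtain ⟨E, hE, hc, he⟩ := fm_exists k wt S
        by_cases hvE : v ∈ E
        · have hSE : (S \ E).Nonempty := by
            rw [Finset.sdiff_nonempty]
            intro h
            have := Finset.card_le_card h
            omega
          obtain ⟨u, hu⟩ := hSE
          have huS : u ∈ S := (Finset.mem_sdiff.1 hu).1
          have huE : u ∉ E := (Finset.mem_sdiff.1 hu).2
          have huv : u ≠ v := fun h => huE (h ▸ hvE)
          have hsub : insert u (E.erase v) ⊆ S.erase v := by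
            apply Finset.insert_subset_iff.2
            exact ⟨Finset.mem_erase.2 ⟨huv, huS⟩, Finset.erase_subset_erase _ hE⟩
          have hc' : (insert u (E.erase v)).card ≤ k := by
            have h1 := Finset.card_insert_le u (E.erase v)
            have h2 := Finset.card_erase_of_mem hvE
            have h3 : 1 ≤ E.card := Finset.card_pos.2 ⟨v, hvE⟩
            omega
          have hsum' : ∑ x ∈ E, wt x ≤ ∑ x ∈ insert u (E.erase v), wt x := by
            rw [Finset.sum_insert (fun h => huE (Finset.erase_subset _ _ h)),
              ← Finset.add_sum_erase _ _ hvE]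
            have := hmin u huS
            linarith
          rw [he]
          exact hsum'.trans (sum_le_fm wt hsub hc')
        · rw [he]
          apply sum_le_fm wt _ hc
          intro x hx
          exact Finset.mem_erase.2 ⟨fun h => hvE (h ▸ hx), hE hx⟩
      · exact fm_mono_set wt (Finset.erase_subset _ _)
    -- topList unchanged
    have hval : S.val = v ::ₘ (S.erase v).val := by
      rw [Finset.erase_val, Multiset.cons_erase (by exact hvS : v ∈ S.val)]
    have hsort : (S.val.map wt).sort (· ≤ ·) =
        wt v :: ((S.erase v).val.map wt).sort (· ≤ ·) := by
      rw [hval, Multiset.map_cons]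
      apply Multiset.sort_cons
      intro b hb
      obtain ⟨u, hu, rfl⟩ := Multiset.mem_map.1 hb
      exact hmin u (Finset.mem_of_mem_erase (by exact hu))
    have hlen' : (((S.erase v).val.map wt).sort (· ≤ ·)).length = S.card - 1 := by
      rw [Multiset.length_sort, Multiset.card_map, ← hcarde]; rfl
    have htl : topList k wt S = topList k wt (S.erase v) := by
      simp only [topList, hsort]
      rw [List.length_cons, hlen']
      have e1 : k - (S.card - 1 + 1) = 0 := by omega
      have e2 : k - (S.card - 1) = 0 := by omega
      have e3 : S.card - 1 + 1 - k = (S.card - 1 - k) + 1 := by omega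
      rw [e1, e2, e3, List.drop_succ_cons]
    rw [htl, hfm]
    exact ih (S.card - 1) (by omega) (S.erase v) hcarde
      (fun x hx => hw x (Finset.mem_of_mem_erase hx))

lemma sum_topList (k : ℕ) (wt : ℕ → ℝ) (S : Finset ℕ) (hw : ∀ x ∈ S, 0 ≤ wt x) :
    (topList k wt S).sum = fm k wt S :=
  sum_topList_aux k wt S.card S rfl hw

lemma sum_range_getD (l : List ℝ) (i : ℕ) (h : i ≤ l.length) :
    ∑ j ∈ Finset.range i, l.getD j 0 = (l.take i).sum := by
  induction i with
  | zero => simp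
  | succ i ih =>
    rw [Finset.sum_range_succ, ih (by omega)]
    have hi : i < l.length := by omega
    rw [List.sum_take_succ _ _ hi, List.getD_eq_getElem l 0 hi]

lemma topList_prefix (k i : ℕ) (wt : ℕ → ℝ) (S : Finset ℕ) (hik : i ≤ k)
    (hw : ∀ x ∈ S, 0 ≤ wt x) :
    ∑ j ∈ Finset.range i, (topList k wt S).getD j 0 = fm k wt S - fm (k - i) wt S := by
  rw [sum_range_getD _ i (by rw [length_topList]; exact hik)]
  have hsplit : (topList k wt S).sum =
      ((topList k wt S).take i).sum + ((topList k wt S).drop i).sum := by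
    rw [← List.sum_append, List.take_append_drop]
  rw [topList_drop, sum_topList _ _ _ hw] at hsplit
  rw [sum_topList _ _ _ hw] at hsplit
  linarith

/-- the per-item hedging term -/
noncomputable def gterm (k : ℕ) (wt : ℕ → ℝ) (V P : Finset ℕ) : ℝ :=
  max (sSup ((fun i => ∑ j ∈ Finset.range i,
      ((topList k wt V).getD j 0 - (topList k wt P).getD j 0)) '' Set.Icc 1 k)) 0

lemma icc0k_nonempty (k : ℕ) : (Finset.Icc 0 k).Nonempty := ⟨0, by simp⟩

lemma gterm_eq (k : ℕ) (hk : 1 ≤ k) (wt : ℕ → ℝ) (V P : Finset ℕ)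
    (hwV : ∀ x ∈ V, 0 ≤ wt x) (hwP : ∀ x ∈ P, 0 ≤ wt x) :
    gterm k wt V P = (fm k wt V - fm k wt P) -
      (Finset.Icc 0 k).inf' (icc0k_nonempty k) (fun m => fm m wt V - fm m wt P) := by
  set φ : ℕ → ℝ := fun m => fm m wt V - fm m wt P with hφ
  set F : ℕ → ℝ := fun i => ∑ j ∈ Finset.range i,
      ((topList k wt V).getD j 0 - (topList k wt P).getD j 0) with hF
  have hFval : ∀ i ∈ Finset.Icc 1 k, F i = φ k - φ (k - i) := by
    intro i hi
    rw [Finset.mem_Icc] at hi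
    rw [hF]
    simp only [Finset.sum_sub_distrib]
    rw [topList_prefix k i wt V hi.2 hwV, topList_prefix k i wt P hi.2 hwP]
    simp only [hφ]
    ring
  have himg : (F '' Set.Icc 1 k) = ↑((Finset.Icc 1 k).image F) := by
    rw [Finset.coe_image, Finset.coe_Icc]
  have hne : ((Finset.Icc 1 k).image F).Nonempty :=
    Finset.Nonempty.image ⟨1, by simp [hk]⟩ _
  have hsup : sSup (F '' Set.Icc 1 k) = ((Finset.Icc 1 k).image F).max' hne := by
    rw [himg]; exact Finset.Nonempty.csSup_eq_max' _
  rw [gterm, hsup]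
  apply le_antisymm
  · apply max_le
    · apply Finset.max'_le
      intro y hy
      obtain ⟨i, hi, rfl⟩ := Finset.mem_image.1 hy
      rw [hFval i hi]
      have : (Finset.Icc 0 k).inf' (icc0k_nonempty k) φ ≤ φ (k - i) :=
        Finset.inf'_le _ (by simp)
      simp only [hφ] at this ⊢
      linarith
    · have : (Finset.Icc 0 k).inf' (icc0k_nonempty k) φ ≤ φ k :=
        Finset.inf'_le _ (by simp)
      simp only [hφ] at this ⊢
      linarith
  · obtain ⟨m, hm, hmin⟩ := Finset.exists_mem_eq_inf' (icc0k_nonempty k) φ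
    rw [Finset.mem_Icc] at hm
    rw [hmin]
    by_cases hmk : m = k
    · subst hmk
      simp only [hφ]
      rw [show fm m wt V - fm m wt P - (fm m wt V - fm m wt P) = 0 by ring]
      exact le_max_right _ _
    · have hmlt : m < k := lt_of_le_of_ne hm.2 hmk
      apply le_max_of_le_left
      apply Finset.le_max'
      apply Finset.mem_image.2
      refine ⟨k - m, by rw [Finset.mem_Icc]; omega, ?_⟩
      rw [hFval (k - m) (by rw [Finset.mem_Icc]; omega)]
      rw [show k - (k - m) = m by omega]

lemma gterm_nonneg (k : ℕ) (wt : ℕ → ℝ) (V P : Finset ℕ) : 0 ≤ gterm k wt V P :=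
  le_max_right _ _

lemma inf_phi_insert (k : ℕ) (wt : ℕ → ℝ) (V P : Finset ℕ) (v : ℕ)
    (hvV : v ∉ V) (hvP : v ∉ P) :
    (Finset.Icc 0 k).inf' (icc0k_nonempty k) (fun m => fm m wt V - fm m wt P) ≤
    (Finset.Icc 0 k).inf' (icc0k_nonempty k)
      (fun m => fm m wt (insert v V) - fm m wt (insert v P)) := by
  apply Finset.le_inf'
  intro m hm
  rcases Nat.eq_zero_or_pos m with rfl | hm1
  · rw [fm_zero, fm_zero]
    have : (Finset.Icc 0 k).inf' (icc0k_nonempty k) (fun m => fm m wt V - fm m wt P) ≤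
        fm 0 wt V - fm 0 wt P := Finset.inf'_le _ (by simp)
    rw [fm_zero, fm_zero] at this
    linarith
  · rw [fm_insert wt hvV hm1, fm_insert wt hvP hm1]
    have h1 : (Finset.Icc 0 k).inf' (icc0k_nonempty k) (fun m => fm m wt V - fm m wt P) ≤
        fm m wt V - fm m wt P := Finset.inf'_le _ hm
    have h2 : (Finset.Icc 0 k).inf' (icc0k_nonempty k) (fun m => fm m wt V - fm m wt P) ≤
        fm (m - 1) wt V - fm (m - 1) wt P := by
      apply Finset.inf'_le
      rw [Finset.mem_Icc] at hm ⊢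
      omega
    rcases max_choice (fm m wt P) (wt v + fm (m - 1) wt P) with h | h <;> rw [h]
    · have := le_max_left (fm m wt V) (wt v + fm (m - 1) wt V)
      linarith
    · have := le_max_right (fm m wt V) (wt v + fm (m - 1) wt V)
      linarith

lemma gterm_step (k : ℕ) (hk : 1 ≤ k) (wt : ℕ → ℝ) (V P : Finset ℕ) (v : ℕ)
    (hvV : v ∉ V) (hvP : v ∉ P)
    (hwV : ∀ x ∈ insert v V, 0 ≤ wt x) (hwP : ∀ x ∈ insert v P, 0 ≤ wt x) :
    fm k wt (insert v P) - fm k wt P + gterm k wt (insert v V) (insert v P) ≤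
    fm k wt (insert v V) - fm k wt V + gterm k wt V P := by
  rw [gterm_eq k hk wt _ _ hwV hwP,
    gterm_eq k hk wt V P (fun x hx => hwV x (Finset.mem_insert_of_mem hx))
      (fun x hx => hwP x (Finset.mem_insert_of_mem hx))]
  have := inf_phi_insert k wt V P v hvV hvP
  linarith

lemma Vset_zero {U : Type*} [DecidableEq U] (x : ℕ → Option U) (u : U) :
    Vset x u 0 = ∅ := by simp [Vset]

lemma Vset_succ {U : Type*} [DecidableEq U] (x : ℕ → Option U) (u : U) (v : ℕ) :
    Vset x u (v+1) = if x (v+1) = some u then insert (v+1) (Vset x u v)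
      else Vset x u v := by
  unfold Vset
  rw [show Finset.Icc 1 (v+1) = insert (v+1) (Finset.Icc 1 v) by
    ext a
    simp only [Finset.mem_Icc, Finset.mem_insert]
    omega]
  rw [Finset.filter_insert]

lemma not_mem_Vset {U : Type*} [DecidableEq U] (x : ℕ → Option U) (u : U) (v : ℕ) :
    v + 1 ∉ Vset x u v := by
  simp only [Vset, Finset.mem_filter, Finset.mem_Icc]
  intro h
  omega

lemma hedgeSum_eq {U : Type*} [Fintype U] (c : U → ℕ) (w : U → ℕ → ℝ)
    (V P : U → Finset ℕ) :
    hedgeSum c w V P = ∑ u : U, gterm (c u) (w u) (V u) (P u) := rfl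

lemma sum_sub_single {U : Type*} [Fintype U] [DecidableEq U] (F G : U → ℝ) (u₀ : U)
    (h : ∀ u, u ≠ u₀ → F u = G u) :
    (∑ u : U, F u) - (∑ u : U, G u) = F u₀ - G u₀ := by
  rw [← Finset.sum_sub_distrib]
  rw [Finset.sum_eq_single u₀ (fun u _ hu => by rw [h u hu]; ring) (by simp)]

lemma totalRew_succ_none {U : Type*} [Fintype U] [DecidableEq U] (c : U → ℕ)
    (w : U → ℕ → ℝ) (x : ℕ → Option U) (v : ℕ) (h : x (v+1) = none) :
    totalRew c w x (v+1) = totalRew c w x v := by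
  unfold totalRew
  apply Finset.sum_congr rfl
  intro u _
  rw [Vset_succ, h]
  simp

lemma totalRew_succ_some {U : Type*} [Fintype U] [DecidableEq U] (c : U → ℕ)
    (w : U → ℕ → ℝ) (x : ℕ → Option U) (v : ℕ) (u₀ : U) (h : x (v+1) = some u₀) :
    totalRew c w x (v+1) = totalRew c w x v +
      (fRew (c u₀) (w u₀) (insert (v+1) (Vset x u₀ v)) - fRew (c u₀) (w u₀) (Vset x u₀ v)) := by
  unfold totalRew
  have key : (∑ u : U, fRew (c u) (w u) (Vset x u (v+1))) -
      (∑ u : U, fRew (c u) (w u) (Vset x u v)) =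
      fRew (c u₀) (w u₀) (Vset x u₀ (v+1)) - fRew (c u₀) (w u₀) (Vset x u₀ v) := by
    apply sum_sub_single
    intro u hu
    rw [Vset_succ, h, if_neg (by simp only [Option.some_inj]; exact fun hh => hu hh.symm)]
  have hV : Vset x u₀ (v+1) = insert (v+1) (Vset x u₀ v) := by
    rw [Vset_succ, h]; simp
  rw [hV] at key
  linarith

theorem lomar_free_disposal_invariant'
    {U : Type*} [Fintype U] [DecidableEq U]
    (c : U → ℕ) (hc : ∀ u, 1 ≤ c u) (T : ℕ) (w : U → ℕ → ℝ)
    (hw : ∀ u v, 0 ≤ w u v)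
    (ρ B : ℝ) (hρ₀ : 0 ≤ ρ) (hρ₁ : ρ ≤ 1) (hB : 0 ≤ B)
    (xπ : ℕ → U) (xt x : ℕ → Option U)
    (hfollow : ∀ v, 1 ≤ v → v ≤ T → fdCond c w ρ B xπ x xt v → x v = xt v)
    (hexpert : ∀ v, 1 ≤ v → v ≤ T → ¬ fdCond c w ρ B xπ x xt v → x v = some (xπ v)) :
    ∀ v ≤ T, totalRew c w x v ≥
      ρ * (totalRew c w (fun v' => some (xπ v')) v +
        hedgeSum c w (fun u => Vset x u v) (fun u => Vset (fun v' => some (xπ v')) u v))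
      - B := by
  intro v
  induction v with
  | zero =>
    intro _
    have h1 : totalRew c w x 0 = 0 := by
      unfold totalRew
      apply Finset.sum_eq_zero
      intro u _
      rw [Vset_zero, fRew_eq_fm, fm_empty]
    have h2 : totalRew c w (fun v' => some (xπ v')) 0 = 0 := by
      unfold totalRew
      apply Finset.sum_eq_zero
      intro u _
      rw [Vset_zero, fRew_eq_fm, fm_empty]
    have h3 : hedgeSum c w (fun u => Vset x u 0)
        (fun u => Vset (fun v' => some (xπ v')) u 0) = 0 := by
      rw [hedgeSum_eq]
      apply Finset.sum_eq_zero
      intro u _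
      rw [Vset_zero, Vset_zero, gterm_eq (c u) (hc u) (w u) ∅ ∅ (by simp) (by simp)]
      simp [fm_empty, Finset.inf'_const]
    rw [h1, h2, h3]
    -- 0 ≥ ρ * (0 + 0) - B
    simp only [add_zero, mul_zero]
    linarith
  | succ v ihv =>
    intro hvT
    have ih := ihv (by omega)
    by_cases hcond : fdCond c w ρ B xπ x xt (v+1)
    · have hx := hfollow (v+1) (by omega) hvT hcond
      unfold fdCond at hcond
      simp only [Nat.add_sub_cancel] at hcond
      have hB2 : (fun u => if xt (v+1) = some u then insert (v+1) (Vset x u v)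
          else Vset x u v) = fun u => Vset x u (v+1) := by
        funext u
        rw [Vset_succ, hx]
      have hA : totalRew c w x v + ((xt (v+1)).elim (0:ℝ) fun u =>
          fRew (c u) (w u) (insert (v+1) (Vset x u v)) - fRew (c u) (w u) (Vset x u v)) =
          totalRew c w x (v+1) := by
        cases hxt : xt (v+1) with
        | none =>
          rw [totalRew_succ_none c w x v (hx.trans hxt)]
          simp
        | some u₁ =>
          rw [totalRew_succ_some c w x v u₁ (hx.trans hxt)]
          simp
      rw [hB2, hA] at hcond
      exact hcond
    · have hx := hexpert (v+1) (by omega) hvT hcond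
      set u₀ := xπ (v+1) with hu₀
      set Vx := Vset x u₀ v with hVx
      set Vπ := Vset (fun v' => some (xπ v')) u₀ v with hVπ
      have hxπ : (fun v' => some (xπ v')) (v+1) = some u₀ := rfl
      have hA := totalRew_succ_some c w x v u₀ hx
      have hAπ := totalRew_succ_some c w (fun v' => some (xπ v')) v u₀ hxπ
      -- hedge sum step equality
      have hG : hedgeSum c w (fun u => Vset x u (v+1))
            (fun u => Vset (fun v' => some (xπ v')) u (v+1)) -
          hedgeSum c w (fun u => Vset x u v)
            (fun u => Vset (fun v' => some (xπ v')) u v) =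
          gterm (c u₀) (w u₀) (insert (v+1) Vx) (insert (v+1) Vπ) -
          gterm (c u₀) (w u₀) Vx Vπ := by
        rw [hedgeSum_eq, hedgeSum_eq]
        have := sum_sub_single
          (fun u => gterm (c u) (w u) (Vset x u (v+1))
            (Vset (fun v' => some (xπ v')) u (v+1)))
          (fun u => gterm (c u) (w u) (Vset x u v)
            (Vset (fun v' => some (xπ v')) u v)) u₀
          (fun u hu => by
            have h1 : ¬ (some u₀ = some u) := by
              simp only [Option.some_inj]
              exact fun hh => hu hh.symm
            beta_reduce
            simp only [Vset_succ, hx, ← hu₀, if_neg h1])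
        rw [this]
        beta_reduce
        have e1 : Vset x u₀ (v+1) = insert (v+1) Vx := by rw [Vset_succ, hx]; simp [hVx]
        have e2 : Vset (fun v' => some (xπ v')) u₀ (v+1) = insert (v+1) Vπ := by
          rw [Vset_succ]; simp [hVπ, ← hu₀]
        rw [e1, e2]
      -- the key per-step inequality
      have hstep := gterm_step (c u₀) (hc u₀) (w u₀) Vx Vπ (v+1)
        (not_mem_Vset x u₀ v) (not_mem_Vset _ u₀ v)
        (fun y _ => hw u₀ y) (fun y _ => hw u₀ y)
      set ΔA := fRew (c u₀) (w u₀) (insert (v+1) Vx) - fRew (c u₀) (w u₀) Vx with hΔA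
      set ΔB := fRew (c u₀) (w u₀) (insert (v+1) Vπ) - fRew (c u₀) (w u₀) Vπ with hΔB
      set g := gterm (c u₀) (w u₀) Vx Vπ with hg
      set g' := gterm (c u₀) (w u₀) (insert (v+1) Vx) (insert (v+1) Vπ) with hg'
      have hstep' : ΔB + g' - g ≤ ΔA := by
        rw [hΔA, hΔB, fRew_eq_fm, fRew_eq_fm, fRew_eq_fm, fRew_eq_fm]
        linarith [hstep]
      have hΔA0 : 0 ≤ ΔA := by
        rw [hΔA, fRew_eq_fm, fRew_eq_fm]
        have := fm_mono_set (m := c u₀) (w u₀) (Finset.subset_insert (v+1) Vx)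
        linarith
      have hρt : ρ * (ΔB + g' - g) ≤ ΔA := by
        rcases le_total (ΔB + g' - g) 0 with h | h
        · have : ρ * (ΔB + g' - g) ≤ 0 := mul_nonpos_of_nonneg_of_nonpos hρ₀ h
          linarith
        · nlinarith
      -- assemble
      have expand : ρ * (totalRew c w (fun v' => some (xπ v')) (v+1) +
          hedgeSum c w (fun u => Vset x u (v+1))
            (fun u => Vset (fun v' => some (xπ v')) u (v+1))) - B =
          (ρ * (totalRew c w (fun v' => some (xπ v')) v +
            hedgeSum c w (fun u => Vset x u v)
              (fun u => Vset (fun v' => some (xπ v')) u v)) - B) +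
          ρ * (ΔB + g' - g) := by
        have hH' : hedgeSum c w (fun u => Vset x u (v+1))
            (fun u => Vset (fun v' => some (xπ v')) u (v+1)) =
            hedgeSum c w (fun u => Vset x u v)
              (fun u => Vset (fun v' => some (xπ v')) u v) + (g' - g) := by
          linarith [hG]
        rw [hAπ, hH']
        ring
      rw [hA, expand]
      linarith

/-- **Robustness invariant of LOMAR in the free-disposal setting.**
For every `ρ ∈ [0,1]`, `B ≥ 0`, every expert strategy `x^π` (with `x^π_v ∈ U` for
each `v`), and every sequence of RL suggestions `x̃_v ∈ U ∪ {skip}`, the strategy `x`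
produced by LOMAR's free-disposal switching rule satisfies, at every step
`v ∈ {0, 1, …, T}`, the invariant
`R_v ≥ ρ·( R^π_v + G̃((V_{u,v})_u, (V^π_{u,v})_u) ) − B`. -/
theorem lomar_free_disposal_invariant
    {U : Type*} [Fintype U] [DecidableEq U]
    (c : U → ℕ) (hc : ∀ u, 1 ≤ c u) (T : ℕ) (w : U → ℕ → ℝ)
    (hw : ∀ u v, 0 ≤ w u v)
    (ρ B : ℝ) (hρ₀ : 0 ≤ ρ) (hρ₁ : ρ ≤ 1) (hB : 0 ≤ B)
    (xπ : ℕ → U) (xt x : ℕ → Option U)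
    (hfollow : ∀ v, 1 ≤ v → v ≤ T → fdCond c w ρ B xπ x xt v → x v = xt v)
    (hexpert : ∀ v, 1 ≤ v → v ≤ T → ¬ fdCond c w ρ B xπ x xt v → x v = some (xπ v)) :
    ∀ v ≤ T, totalRew c w x v ≥
      ρ * (totalRew c w (fun v' => some (xπ v')) v +
        hedgeSum c w (fun u => Vset x u v) (fun u => Vset (fun v' => some (xπ v')) u v))
      - B := by
  exact lomar_free_disposal_invariant' c hc T w hw ρ B hρ₀ hρ₁ hB xπ xt x hfollow hexpert
end
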